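/- arXiv:2208.01291 — 4 statements merged into one kernel-verified Lean document; each statement's English description precedes it below -/
import Mathlib

section
/- Under the inner conditions of Lemma 1, the integrated energy balance (3-14b) holds: if x : ℝ → ℝⁿ is differentiable with ẋ(t) = ā(x(t)) + B(x(t)) v(t), v is continuous, ā, B, c̄, D̄, ∇P are continuous, and z̄(t) := c̄(x(t)) + D̄(x(t)) v(t), then for all t₁ ≤ t₂, P(x(t₂)) − P(x(t₁)) = ∫_{t₁}^{t₂} ( ½ ‖v(τ)‖² − ½ ‖z̄(τ)‖² ) dτ. -/
open Matrix

/-- Under the inner conditions of Lemma 1, the integrated energy balance (3-14b) holds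
along every trajectory: `P(x(t₂)) − P(x(t₁)) = ∫_{t₁}^{t₂} (½‖v‖² − ½‖z̄‖²) dτ`. -/
theorem stmt15 (n p q : ℕ) (hn : 0 < n) (hp : 0 < p) (hq : 0 < q)
    (abar : (Fin n → ℝ) → (Fin n → ℝ))
    (B : (Fin n → ℝ) → Matrix (Fin n) (Fin p) ℝ)
    (cbar : (Fin n → ℝ) → (Fin q → ℝ))
    (Dbar : (Fin n → ℝ) → Matrix (Fin q) (Fin p) ℝ)
    (P : (Fin n → ℝ) → ℝ) (gradP : (Fin n → ℝ) → (Fin n → ℝ))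
    (hPdiff : Differentiable ℝ P)
    (hgrad : ∀ x h, fderiv ℝ P x h = gradP x ⬝ᵥ h)
    (habar : Continuous abar) (hB : Continuous B) (hcbar : Continuous cbar)
    (hDbar : Continuous Dbar) (hgradc : Continuous gradP)
    (h1 : ∀ x, gradP x ⬝ᵥ abar x + (1 / 2 : ℝ) * (cbar x ⬝ᵥ cbar x) = 0)
    (h2 : ∀ x, (B x)ᵀ *ᵥ gradP x + (Dbar x)ᵀ *ᵥ cbar x = 0)
    (h3 : ∀ x, (Dbar x)ᵀ * Dbar x = 1)
    (x : ℝ → (Fin n → ℝ)) (v : ℝ → (Fin p → ℝ)) (hv : Continuous v)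
    (hx : ∀ t, HasDerivAt x (abar (x t) + B (x t) *ᵥ v t) t) :
    ∀ t₁ t₂ : ℝ, t₁ ≤ t₂ →
      P (x t₂) - P (x t₁)
        = ∫ τ in t₁..t₂,
            ((1 / 2 : ℝ) * (v τ ⬝ᵥ v τ)
              - (1 / 2 : ℝ)
                * ((cbar (x τ) + Dbar (x τ) *ᵥ v τ) ⬝ᵥ (cbar (x τ) + Dbar (x τ) *ᵥ v τ))) := by
  intro t₁ t₂ _
  have hxc : Continuous x := by
    have : Differentiable ℝ x := fun t => (hx t).differentiableAt
    exact this.continuous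
  -- key derivative computation
  have hderiv : ∀ t : ℝ, HasDerivAt (fun τ => P (x τ))
      ((1 / 2 : ℝ) * (v t ⬝ᵥ v t)
        - (1 / 2 : ℝ)
          * ((cbar (x t) + Dbar (x t) *ᵥ v t) ⬝ᵥ (cbar (x t) + Dbar (x t) *ᵥ v t))) t := by
    intro t
    have hP : HasFDerivAt P (fderiv ℝ P (x t)) (x t) := (hPdiff (x t)).hasFDerivAt
    have h := hP.comp_hasDerivAt t (hx t)
    have key : fderiv ℝ P (x t) (abar (x t) + B (x t) *ᵥ v t)
        = (1 / 2 : ℝ) * (v t ⬝ᵥ v t)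
          - (1 / 2 : ℝ)
            * ((cbar (x t) + Dbar (x t) *ᵥ v t) ⬝ᵥ (cbar (x t) + Dbar (x t) *ᵥ v t)) := by
      rw [hgrad]
      set g := gradP (x t)
      set a := abar (x t)
      set Bt := B (x t)
      set c := cbar (x t)
      set D := Dbar (x t)
      set w := v t
      have e1 : g ⬝ᵥ a + (1 / 2 : ℝ) * (c ⬝ᵥ c) = 0 := h1 (x t)
      have e2 : Btᵀ *ᵥ g + Dᵀ *ᵥ c = 0 := h2 (x t)
      have e3 : Dᵀ * D = 1 := h3 (x t)
      have hBv : g ⬝ᵥ (Bt *ᵥ w) = (Btᵀ *ᵥ g) ⬝ᵥ w := by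
        rw [Matrix.dotProduct_mulVec, Matrix.mulVec_transpose]
      have hDD : (D *ᵥ w) ⬝ᵥ (D *ᵥ w) = w ⬝ᵥ w := by
        rw [Matrix.dotProduct_mulVec, ← Matrix.mulVec_transpose,
          Matrix.mulVec_mulVec, e3, Matrix.one_mulVec]
      have hcD : c ⬝ᵥ (D *ᵥ w) = (Dᵀ *ᵥ c) ⬝ᵥ w := by
        rw [Matrix.dotProduct_mulVec, Matrix.mulVec_transpose]
      have hBg : Btᵀ *ᵥ g = -(Dᵀ *ᵥ c) := by
        funext i
        have := congrFun e2 i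
        simp only [Pi.add_apply, Pi.zero_apply] at this
        simp only [Pi.neg_apply]
        linarith
      have hgB : g ⬝ᵥ (Bt *ᵥ w) = -(c ⬝ᵥ (D *ᵥ w)) := by
        rw [hBv, hBg, neg_dotProduct, hcD]
      simp only [dotProduct_add, add_dotProduct]
      have hsym : (D *ᵥ w) ⬝ᵥ c = c ⬝ᵥ (D *ᵥ w) := dotProduct_comm _ _
      rw [hgB, hDD, hsym]
      linarith
    rw [key] at h
    exact h
  -- continuity of the integrand
  have hcont : Continuous (fun τ =>
      ((1 / 2 : ℝ) * (v τ ⬝ᵥ v τ)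
        - (1 / 2 : ℝ)
          * ((cbar (x τ) + Dbar (x τ) *ᵥ v τ) ⬝ᵥ (cbar (x τ) + Dbar (x τ) *ᵥ v τ)))) := by
    have hz : Continuous (fun τ => cbar (x τ) + Dbar (x τ) *ᵥ v τ) := by
      exact (hcbar.comp hxc).add ((hDbar.comp hxc).matrix_mulVec hv)
    exact (continuous_const.mul (hv.dotProduct hv)).sub
      (continuous_const.mul (hz.dotProduct hz))
  rw [← intervalIntegral.integral_eq_sub_of_hasDerivAt
    (fun t _ => hderiv t) (hcont.intervalIntegrable t₁ t₂)]
end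

section
/- Under the inner conditions of Lemma 1, if additionally P(x) ≥ 0 for all x and the trajectory starts at a point with P(x(0)) = 0, then the output energy never exceeds the input energy on any finite horizon: for every T ≥ 0, ∫₀^T ‖z̄(τ)‖² dτ ≤ ∫₀^T ‖v(τ)‖² dτ, where x : ℝ → ℝⁿ is differentiable with ẋ(t) = ā(x(t)) + B(x(t)) v(t), v is continuous, ā, B, c̄, D̄, ∇P are continuous, and z̄(t) := c̄(x(t)) + D̄(x(t)) v(t). -/
open Matrix

/-- Under the inner conditions of Lemma 1, with nonnegative storage function `P` and a
trajectory starting at a point with `P(x(0)) = 0`, the output energy never exceeds the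
input energy on any finite horizon: `∫₀^T ‖z̄‖² ≤ ∫₀^T ‖v‖²` for all `T ≥ 0`. -/
theorem stmt16 (n p q : ℕ) (hn : 0 < n) (hp : 0 < p) (hq : 0 < q)
    (abar : (Fin n → ℝ) → (Fin n → ℝ))
    (B : (Fin n → ℝ) → Matrix (Fin n) (Fin p) ℝ)
    (cbar : (Fin n → ℝ) → (Fin q → ℝ))
    (Dbar : (Fin n → ℝ) → Matrix (Fin q) (Fin p) ℝ)
    (P : (Fin n → ℝ) → ℝ) (gradP : (Fin n → ℝ) → (Fin n → ℝ))
    (hPdiff : Differentiable ℝ P)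
    (hgrad : ∀ x h, fderiv ℝ P x h = gradP x ⬝ᵥ h)
    (habar : Continuous abar) (hB : Continuous B) (hcbar : Continuous cbar)
    (hDbar : Continuous Dbar) (hgradc : Continuous gradP)
    (h1 : ∀ x, gradP x ⬝ᵥ abar x + (1 / 2 : ℝ) * (cbar x ⬝ᵥ cbar x) = 0)
    (h2 : ∀ x, (B x)ᵀ *ᵥ gradP x + (Dbar x)ᵀ *ᵥ cbar x = 0)
    (h3 : ∀ x, (Dbar x)ᵀ * Dbar x = 1)
    (hPnonneg : ∀ y, 0 ≤ P y)
    (x : ℝ → (Fin n → ℝ)) (v : ℝ → (Fin p → ℝ)) (hv : Continuous v)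
    (hx : ∀ t, HasDerivAt x (abar (x t) + B (x t) *ᵥ v t) t)
    (hx0 : P (x 0) = 0) :
    ∀ T : ℝ, 0 ≤ T →
      (∫ τ in (0 : ℝ)..T,
          (cbar (x τ) + Dbar (x τ) *ᵥ v τ) ⬝ᵥ (cbar (x τ) + Dbar (x τ) *ᵥ v τ))
        ≤ ∫ τ in (0 : ℝ)..T, v τ ⬝ᵥ v τ := by
  intro T hT
  set z : ℝ → (Fin q → ℝ) := fun t => cbar (x t) + Dbar (x t) *ᵥ v t with hz
  have hxc : Continuous x := by
    rw [continuous_iff_continuousAt]; exact fun t => (hx t).continuousAt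
  -- the energy-balance derivative
  have key : ∀ t, HasDerivAt (fun s => P (x s)) ((v t ⬝ᵥ v t - z t ⬝ᵥ z t) / 2) t := by
    intro t
    have h := ((hPdiff (x t)).hasFDerivAt).comp_hasDerivAt t (hx t)
    refine h.congr_deriv ?_
    symm
    rw [hgrad]
    set y := x t
    set u := v t
    -- expand
    have hzz : z t ⬝ᵥ z t =
        cbar y ⬝ᵥ cbar y + 2 * (((Dbar y)ᵀ *ᵥ cbar y) ⬝ᵥ u) + u ⬝ᵥ u := by
      have hDD : (Dbar y *ᵥ u) ⬝ᵥ (Dbar y *ᵥ u) = u ⬝ᵥ u := by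
        rw [Matrix.dotProduct_mulVec, ← Matrix.mulVec_transpose, Matrix.mulVec_mulVec,
          h3 y, Matrix.one_mulVec]
      have hcD : cbar y ⬝ᵥ (Dbar y *ᵥ u) = ((Dbar y)ᵀ *ᵥ cbar y) ⬝ᵥ u := by
        rw [Matrix.dotProduct_mulVec, Matrix.mulVec_transpose]
      simp only [hz, dotProduct_add, add_dotProduct]
      rw [dotProduct_comm (Dbar y *ᵥ u) (cbar y), hDD, hcD]
      ring
    have hBv : gradP y ⬝ᵥ (B y *ᵥ u) = -((((Dbar y)ᵀ *ᵥ cbar y) ⬝ᵥ u)) := by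
      have h2' : (B y)ᵀ *ᵥ gradP y = -((Dbar y)ᵀ *ᵥ cbar y) := by
        have h := h2 y; funext i; have := congrFun h i; simp [Pi.add_apply] at this ⊢; linarith
      rw [Matrix.dotProduct_mulVec, ← Matrix.mulVec_transpose, h2',
        neg_dotProduct]
    have h1' := h1 y
    rw [hzz, dotProduct_add, hBv]
    linarith [h1']
  -- continuity of the integrands
  have hzc : Continuous z := by
    apply Continuous.add (hcbar.comp hxc)
    exact (hDbar.comp hxc).matrix_mulVec hv
  have hzz_c : Continuous fun t => z t ⬝ᵥ z t := hzc.dotProduct hzc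
  have hvv_c : Continuous fun t => v t ⬝ᵥ v t := hv.dotProduct hv
  have hint1 : IntervalIntegrable (fun t => z t ⬝ᵥ z t) MeasureTheory.volume 0 T :=
    hzz_c.intervalIntegrable 0 T
  have hint2 : IntervalIntegrable (fun t => v t ⬝ᵥ v t) MeasureTheory.volume 0 T :=
    hvv_c.intervalIntegrable 0 T
  have hFc : Continuous fun t => (v t ⬝ᵥ v t - z t ⬝ᵥ z t) / 2 :=
    (hvv_c.sub hzz_c).div_const 2
  have hFTC := intervalIntegral.integral_eq_sub_of_hasDerivAt
    (f := fun s => P (x s)) (f' := fun t => (v t ⬝ᵥ v t - z t ⬝ᵥ z t) / 2)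
    (fun t _ => key t) (hFc.intervalIntegrable 0 T)
  simp only [hx0, sub_zero] at hFTC
  have hPT : 0 ≤ P (x T) := hPnonneg _
  have hsplit : (∫ τ in (0:ℝ)..T, (v τ ⬝ᵥ v τ - z τ ⬝ᵥ z τ) / 2)
      = ((∫ τ in (0:ℝ)..T, v τ ⬝ᵥ v τ) - ∫ τ in (0:ℝ)..T, z τ ⬝ᵥ z τ) / 2 := by
    rw [intervalIntegral.integral_div, intervalIntegral.integral_sub hint2 hint1]
  rw [hsplit] at hFTC
  have : (∫ τ in (0:ℝ)..T, z τ ⬝ᵥ z τ) ≤ ∫ τ in (0:ℝ)..T, v τ ⬝ᵥ v τ := by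
    linarith [hFTC ▸ hPT]
  simpa [hz] using this
end

section
/- Under the inner conditions of Lemma 1 with all data C¹ and P twice continuously differentiable, the costate p(t) := ∇P(x(t)) satisfies the adjoint equation of the Hamiltonian extension along every trajectory: if x : ℝ → ℝⁿ is differentiable with ẋ(t) = ā(x(t)) + B(x(t)) v(t) and z̄(t) := c̄(x(t)) + D̄(x(t)) v(t), then d/dt p(t) = −( Dā(x(t)) + D_x[ B(·) v(t) ](x(t)) )ᵀ p(t) − ( Dc̄(x(t)) + D_x[ D̄(·) v(t) ](x(t)) )ᵀ z̄(t), where Dā, Dc̄ denote Jacobians and D_x[B(·)v], D_x[D̄(·)v] denote the Jacobians of x ↦ B(x)v and x ↦ D̄(x)v with v frozen. -/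
open Matrix

lemma lineDeriv_aux {E F : Type*} [NormedAddCommGroup E] [NormedSpace ℝ E]
    [NormedAddCommGroup F] [NormedSpace ℝ F] {g : E → F} (hg : Differentiable ℝ g)
    (x₀ h : E) : HasDerivAt (fun s : ℝ => g (x₀ + s • h)) (fderiv ℝ g x₀ h) 0 := by
  have hγ : HasDerivAt (fun s : ℝ => x₀ + s • h) h 0 := by
    simpa using ((hasDerivAt_id (0 : ℝ)).smul_const h).const_add x₀
  have := (hg (x₀ + (0:ℝ) • h)).hasFDerivAt.comp_hasDerivAt 0 hγ
  simpa [Function.comp_def] using this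

lemma dot_deriv_aux {q : ℕ} {u c : ℝ → (Fin q → ℝ)} {u' c' : Fin q → ℝ} {s : ℝ}
    (hu : HasDerivAt u u' s) (hc : HasDerivAt c c' s) :
    HasDerivAt (fun r => u r ⬝ᵥ c r) (u' ⬝ᵥ c s + u s ⬝ᵥ c') s := by
  have h : HasDerivAt (fun r => ∑ j, u r j * c r j)
      (∑ j, (u' j * c s j + u s j * c' j)) s :=
    HasDerivAt.fun_sum fun j _ => (hasDerivAt_pi.1 hu j).mul (hasDerivAt_pi.1 hc j)
  simpa [dotProduct, Finset.sum_add_distrib] using h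

lemma clm_dot_aux {n : ℕ} (L : (Fin n → ℝ) →L[ℝ] ℝ) (u : Fin n → ℝ) :
    (fun i => L (Pi.single i 1)) ⬝ᵥ u = L u := by
  have hu : u = ∑ i, u i • (Pi.single i 1 : Fin n → ℝ) := by
    ext j
    simp [Finset.sum_apply, Pi.single_apply]
  conv_rhs => rw [hu]
  rw [map_sum]
  simp [dotProduct, mul_comm]

/-- Under the inner conditions of Lemma 1 with `C¹` data and `C²` storage function, the
costate `p(t) := ∇P(x(t))` satisfies the adjoint equation of the Hamiltonian extension:
`ṗ = −(Dā(x) + Dₓ[B(·)v])ᵀ p − (Dc̄(x) + Dₓ[D̄(·)v])ᵀ z̄` along every trajectory.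
The `i`-th component of `Mᵀ w` is expressed as `(M eᵢ) ⬝ᵥ w` with `eᵢ = Pi.single i 1`. -/
theorem stmt17 (n p q : ℕ) (hn : 0 < n) (hp : 0 < p) (hq : 0 < q)
    (abar : (Fin n → ℝ) → (Fin n → ℝ))
    (B : (Fin n → ℝ) → Matrix (Fin n) (Fin p) ℝ)
    (cbar : (Fin n → ℝ) → (Fin q → ℝ))
    (Dbar : (Fin n → ℝ) → Matrix (Fin q) (Fin p) ℝ)
    (P : (Fin n → ℝ) → ℝ) (gradP : (Fin n → ℝ) → (Fin n → ℝ))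
    (habar : ContDiff ℝ 1 abar)
    (hB : ∀ w : Fin p → ℝ, ContDiff ℝ 1 fun y => B y *ᵥ w)
    (hcbar : ContDiff ℝ 1 cbar)
    (hDbar : ∀ w : Fin p → ℝ, ContDiff ℝ 1 fun y => Dbar y *ᵥ w)
    (hP2 : ContDiff ℝ 2 P)
    (hgrad : ∀ x h, fderiv ℝ P x h = gradP x ⬝ᵥ h)
    (h1 : ∀ x, gradP x ⬝ᵥ abar x + (1 / 2 : ℝ) * (cbar x ⬝ᵥ cbar x) = 0)
    (h2 : ∀ x, (B x)ᵀ *ᵥ gradP x + (Dbar x)ᵀ *ᵥ cbar x = 0)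
    (h3 : ∀ x, (Dbar x)ᵀ * Dbar x = 1)
    (x : ℝ → (Fin n → ℝ)) (v : ℝ → (Fin p → ℝ))
    (hx : ∀ t, HasDerivAt x (abar (x t) + B (x t) *ᵥ v t) t) :
    ∀ t, HasDerivAt (fun s => gradP (x s))
      (fun i =>
        -((fderiv ℝ abar (x t) (Pi.single i 1)
              + fderiv ℝ (fun y => B y *ᵥ v t) (x t) (Pi.single i 1)) ⬝ᵥ gradP (x t))
        - ((fderiv ℝ cbar (x t) (Pi.single i 1)
              + fderiv ℝ (fun y => Dbar y *ᵥ v t) (x t) (Pi.single i 1))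
            ⬝ᵥ (cbar (x t) + Dbar (x t) *ᵥ v t)))
      t := by
  intro t
  have hPd : Differentiable ℝ P := hP2.differentiable (by norm_num)
  have hf1 : ContDiff ℝ 1 (fderiv ℝ P) := hP2.fderiv_right (by norm_num)
  have hfd : Differentiable ℝ (fderiv ℝ P) := hf1.differentiable one_ne_zero
  set x₀ := x t with hx₀def
  set w := v t with hwdef
  have hsymm : ∀ a b, fderiv ℝ (fderiv ℝ P) x₀ a b = fderiv ℝ (fderiv ℝ P) x₀ b a :=
    fun a b => second_derivative_symmetric (fun y => (hPd y).hasFDerivAt)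
      (hfd x₀).hasFDerivAt a b
  have hgrad' : ∀ y i, gradP y i = fderiv ℝ P y (Pi.single i 1) := by
    intro y i; rw [hgrad]; simp
  -- derivative of gradP along any curve
  have hgradcurve : ∀ (γ : ℝ → Fin n → ℝ) (d : Fin n → ℝ) (s : ℝ), HasDerivAt γ d s →
      HasDerivAt (fun r => gradP (γ r))
        (fun i => fderiv ℝ (fderiv ℝ P) (γ s) d (Pi.single i 1)) s := by
    intro γ d s hγ
    rw [hasDerivAt_pi]
    intro i
    have hcomp : HasDerivAt (fun r => fderiv ℝ P (γ r)) (fderiv ℝ (fderiv ℝ P) (γ s) d) s :=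
      (hfd (γ s)).hasFDerivAt.comp_hasDerivAt s hγ
    have happ := hcomp.clm_apply (hasDerivAt_const s (Pi.single i (1:ℝ)))
    simpa only [hgrad', map_zero, add_zero] using happ
  -- three differentiated identities, in an arbitrary direction h
  have key1 : ∀ h : Fin n → ℝ,
      ((fun j => fderiv ℝ (fderiv ℝ P) x₀ h (Pi.single j 1)) ⬝ᵥ abar x₀
        + gradP x₀ ⬝ᵥ fderiv ℝ abar x₀ h)
      + (1 / 2 : ℝ) * (fderiv ℝ cbar x₀ h ⬝ᵥ cbar x₀ + cbar x₀ ⬝ᵥ fderiv ℝ cbar x₀ h)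
      = 0 := by
    intro h
    have hγ : HasDerivAt (fun s : ℝ => x₀ + s • h) h 0 := by
      simpa using ((hasDerivAt_id (0 : ℝ)).smul_const h).const_add x₀
    have hg := hgradcurve (fun s => x₀ + s • h) h 0 hγ
    simp only [zero_smul, add_zero] at hg
    have ha := lineDeriv_aux (habar.differentiable one_ne_zero) x₀ h
    have hc := lineDeriv_aux (hcbar.differentiable one_ne_zero) x₀ h
    have hd1 := dot_deriv_aux hg ha
    have hd2 := dot_deriv_aux hc hc
    have hsum := hd1.add (HasDerivAt.const_mul (1 / 2 : ℝ) hd2)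
    simp only [zero_smul, add_zero] at hsum
    have hz : HasDerivAt (fun _ : ℝ => (0 : ℝ)) _ 0 :=
      hsum.congr_of_eventuallyEq
        (Filter.Eventually.of_forall fun s => (h1 (x₀ + s • h)).symm)
    exact (hz.unique (hasDerivAt_const 0 0))
  have key2 : ∀ h : Fin n → ℝ,
      ((fun j => fderiv ℝ (fderiv ℝ P) x₀ h (Pi.single j 1)) ⬝ᵥ (B x₀ *ᵥ w)
        + gradP x₀ ⬝ᵥ fderiv ℝ (fun y => B y *ᵥ w) x₀ h)
      + (fderiv ℝ cbar x₀ h ⬝ᵥ (Dbar x₀ *ᵥ w)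
        + cbar x₀ ⬝ᵥ fderiv ℝ (fun y => Dbar y *ᵥ w) x₀ h) = 0 := by
    intro h
    have hψ : ∀ y, gradP y ⬝ᵥ (B y *ᵥ w) + cbar y ⬝ᵥ (Dbar y *ᵥ w) = 0 := by
      intro y
      have := congrArg (· ⬝ᵥ w) (h2 y)
      simpa [add_dotProduct, Matrix.mulVec_transpose, ← Matrix.dotProduct_mulVec] using this
    have hγ : HasDerivAt (fun s : ℝ => x₀ + s • h) h 0 := by
      simpa using ((hasDerivAt_id (0 : ℝ)).smul_const h).const_add x₀
    have hg := hgradcurve (fun s => x₀ + s • h) h 0 hγ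
    simp only [zero_smul, add_zero] at hg
    have hb := lineDeriv_aux ((hB w).differentiable one_ne_zero) x₀ h
    have hc := lineDeriv_aux (hcbar.differentiable one_ne_zero) x₀ h
    have hd := lineDeriv_aux ((hDbar w).differentiable one_ne_zero) x₀ h
    have hd1 := dot_deriv_aux hg hb
    have hd2 := dot_deriv_aux hc hd
    have hsum := hd1.add hd2
    simp only [zero_smul, add_zero] at hsum
    have hz : HasDerivAt (fun _ : ℝ => (0 : ℝ)) _ 0 :=
      hsum.congr_of_eventuallyEq
        (Filter.Eventually.of_forall fun s => (hψ (x₀ + s • h)).symm)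
    exact (hz.unique (hasDerivAt_const 0 0))
  have key3 : ∀ h : Fin n → ℝ,
      fderiv ℝ (fun y => Dbar y *ᵥ w) x₀ h ⬝ᵥ (Dbar x₀ *ᵥ w)
        + (Dbar x₀ *ᵥ w) ⬝ᵥ fderiv ℝ (fun y => Dbar y *ᵥ w) x₀ h = 0 := by
    intro h
    have hθ : ∀ y, (Dbar y *ᵥ w) ⬝ᵥ (Dbar y *ᵥ w) = w ⬝ᵥ w := by
      intro y
      rw [Matrix.dotProduct_mulVec, ← Matrix.mulVec_transpose, Matrix.mulVec_mulVec, h3,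
        Matrix.one_mulVec]
    have hd := lineDeriv_aux ((hDbar w).differentiable one_ne_zero) x₀ h
    have hsum := dot_deriv_aux hd hd
    simp only [zero_smul, add_zero] at hsum
    have hz : HasDerivAt (fun _ : ℝ => w ⬝ᵥ w) _ 0 :=
      hsum.congr_of_eventuallyEq
        (Filter.Eventually.of_forall fun s => (hθ (x₀ + s • h)).symm)
    exact (hz.unique (hasDerivAt_const 0 _))
  -- main computation
  rw [hasDerivAt_pi]
  intro i
  have hp : HasDerivAt (fun s => gradP (x s) i)
      (fderiv ℝ (fderiv ℝ P) x₀ (abar x₀ + B x₀ *ᵥ w) (Pi.single i 1)) t :=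
    hasDerivAt_pi.1 (hgradcurve x (abar x₀ + B x₀ *ᵥ w) t (hx t)) i
  have hval : fderiv ℝ (fderiv ℝ P) x₀ (abar x₀ + B x₀ *ᵥ w) (Pi.single i 1)
      = -((fderiv ℝ abar x₀ (Pi.single i 1)
              + fderiv ℝ (fun y => B y *ᵥ w) x₀ (Pi.single i 1)) ⬝ᵥ gradP x₀)
        - ((fderiv ℝ cbar x₀ (Pi.single i 1)
              + fderiv ℝ (fun y => Dbar y *ᵥ w) x₀ (Pi.single i 1))
            ⬝ᵥ (cbar x₀ + Dbar x₀ *ᵥ w)) := by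
    have hsplit : fderiv ℝ (fderiv ℝ P) x₀ (abar x₀ + B x₀ *ᵥ w) (Pi.single i 1)
        = (fun j => fderiv ℝ (fderiv ℝ P) x₀ (Pi.single i 1) (Pi.single j 1)) ⬝ᵥ abar x₀
          + (fun j => fderiv ℝ (fderiv ℝ P) x₀ (Pi.single i 1) (Pi.single j 1))
              ⬝ᵥ (B x₀ *ᵥ w) := by
      rw [clm_dot_aux, clm_dot_aux, hsymm (abar x₀ + B x₀ *ᵥ w) (Pi.single i 1), map_add]
    rw [hsplit]
    have k1 := key1 (Pi.single i 1)
    have k2 := key2 (Pi.single i 1)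
    have k3 := key3 (Pi.single i 1)
    rw [dotProduct_comm (cbar x₀) (fderiv ℝ cbar x₀ (Pi.single i 1))] at k1
    rw [dotProduct_comm (cbar x₀) (fderiv ℝ (fun y => Dbar y *ᵥ w) x₀ (Pi.single i 1))] at k2
    rw [dotProduct_comm (Dbar x₀ *ᵥ w) (fderiv ℝ (fun y => Dbar y *ᵥ w) x₀ (Pi.single i 1))]
      at k3
    rw [dotProduct_comm (gradP x₀) (fderiv ℝ abar x₀ (Pi.single i 1))] at k1
    rw [dotProduct_comm (gradP x₀) (fderiv ℝ (fun y => B y *ᵥ w) x₀ (Pi.single i 1))] at k2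
    simp only [add_dotProduct, dotProduct_add]
    linarith [k1, k2, k3]
  rw [hval] at hp
  exact hp
end

section
/- Stable image representation reproduces the plant transfer function: let A be an n×n, B an n×p, C an m×n, D an m×p, F a p×n, and V an invertible p×p complex matrix, and let s ∈ ℂ be such that sI − A and sI − (A + BF) are invertible and M(s) := F (sI − A − BF)⁻¹ B V + V is invertible. Then, with N(s) := (C + DF)(sI − A − BF)⁻¹ B V + D V, one has N(s) · M(s)⁻¹ = C (sI − A)⁻¹ B + D. -/
open Matrix

lemma stmt18_aux {n m p : ℕ}
    (X Y : Matrix (Fin n) (Fin n) ℂ) (B : Matrix (Fin n) (Fin p) ℂ)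
    (C : Matrix (Fin m) (Fin n) ℂ) (D : Matrix (Fin m) (Fin p) ℂ)
    (F : Matrix (Fin p) (Fin n) ℂ) (V : Matrix (Fin p) (Fin p) ℂ)
    (hkey : X * (B * F) * Y = Y - X) :
    (C + D * F) * Y * B * V + D * V = (C * X * B + D) * (F * Y * B * V + V) := by
  have h1' : C * (X * (B * F) * Y) * (B * V) = C * (Y - X) * (B * V) := by rw [hkey]
  simp only [Matrix.mul_sub, Matrix.sub_mul, Matrix.mul_add, Matrix.add_mul,
    Matrix.mul_assoc] at h1' ⊢
  rw [h1']
  abel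

/-- The stable image representation reproduces the plant transfer function:
with `M(s) = F (sI − A − BF)⁻¹ B V + V` and `N(s) = (C + DF)(sI − A − BF)⁻¹ B V + D V`,
one has `N(s) M(s)⁻¹ = C (sI − A)⁻¹ B + D`. -/
theorem stmt18 (n m p : ℕ)
    (A : Matrix (Fin n) (Fin n) ℂ) (B : Matrix (Fin n) (Fin p) ℂ)
    (C : Matrix (Fin m) (Fin n) ℂ) (D : Matrix (Fin m) (Fin p) ℂ)
    (F : Matrix (Fin p) (Fin n) ℂ) (V : Matrix (Fin p) (Fin p) ℂ)
    (hV : IsUnit V) (s : ℂ)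
    (h1 : IsUnit (s • (1 : Matrix (Fin n) (Fin n) ℂ) - A))
    (h2 : IsUnit (s • (1 : Matrix (Fin n) (Fin n) ℂ) - (A + B * F)))
    (hM : IsUnit (F * (s • (1 : Matrix (Fin n) (Fin n) ℂ) - A - B * F)⁻¹ * B * V + V)) :
    ((C + D * F) * (s • (1 : Matrix (Fin n) (Fin n) ℂ) - A - B * F)⁻¹ * B * V + D * V)
        * (F * (s • (1 : Matrix (Fin n) (Fin n) ℂ) - A - B * F)⁻¹ * B * V + V)⁻¹
      = C * (s • (1 : Matrix (Fin n) (Fin n) ℂ) - A)⁻¹ * B + D := by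
  set P : Matrix (Fin n) (Fin n) ℂ := s • (1 : Matrix (Fin n) (Fin n) ℂ) - A with hPdef
  set Q : Matrix (Fin n) (Fin n) ℂ := s • (1 : Matrix (Fin n) (Fin n) ℂ) - A - B * F
    with hQdef
  have hQ : IsUnit Q := by
    have : Q = s • (1 : Matrix (Fin n) (Fin n) ℂ) - (A + B * F) := by
      rw [hQdef, sub_sub]
    rw [this]; exact h2
  have hPd : IsUnit P.det := (isUnit_iff_isUnit_det P).mp h1
  have hQd : IsUnit Q.det := (isUnit_iff_isUnit_det Q).mp hQ
  have hMd : IsUnit (F * Q⁻¹ * B * V + V).det :=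
    (isUnit_iff_isUnit_det _).mp hM
  have hBF : B * F = P - Q := (sub_sub_cancel P (B * F)).symm
  have key : P⁻¹ * (B * F) * Q⁻¹ = Q⁻¹ - P⁻¹ := by
    rw [hBF, mul_sub, sub_mul, Matrix.nonsing_inv_mul P hPd,
      Matrix.mul_assoc, Matrix.mul_nonsing_inv Q hQd, Matrix.mul_one, Matrix.one_mul]
  rw [stmt18_aux P⁻¹ Q⁻¹ B C D F V key,
    Matrix.mul_nonsing_inv_cancel_right _ _ hMd]
end
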